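/- Let j ≥ 1 and s ≥ 0 be integers, let w be a word of length n over an alphabet Σ, let f : Σ → Σ be an involution and φ the induced antimorphic involution on words. Let 1 ≤ i ≤ n and suppose m = mp_s^j((w[1..i])^R) is finite and m ≤ cmp_w[i]. Then i ≥ jm, i + m ≤ n, and w[i−jm+1..i+m] = x^j φ(x), where x = w[i−m+1..i] and |x| = m > s. -/

import Mathlib

open List

/-- `x^k`: concatenation of `k` copies of the word `x`. -/
def listPow {α : Type*} (x : List α) (k : ℕ) : List α := (List.replicate k x).flatten

/-- Minimal period `mp_s^k(u)` taking values in `ℕ∞`: the least `m > s` such that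
the prefix of `u` of length `k*m` is the `k`-th power of the prefix of length `m`;
`⊤` if no such `m` exists. -/
noncomputable def minPeriod {α : Type*} (k s : ℕ) (u : List α) : ℕ∞ :=
  sInf {N : ℕ∞ | ∃ m : ℕ, N = (m : ℕ∞) ∧ s < m ∧ k * m ≤ u.length ∧
    listPow (u.take m) k <+: u}

/-- Length of the longest common prefix of two words. -/
def lcpLen {α : Type*} [DecidableEq α] (a b : List α) : ℕ :=
  ((a.zip b).takeWhile fun p => decide (p.1 = p.2)).length

/-- The antimorphic involution on words induced by a letter map `f`. -/
def phi {α : Type*} (f : α → α) (u : List α) : List α := (u.map f).reverse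

/-- Centralized maximal pseudo-palindrome array entry `cmp_w[i]`. -/
noncomputable def cmpArr {α : Type*} (f : α → α) (w : List α) (i : ℕ) : ℕ :=
  sSup {m : ℕ | m ≤ min i (w.length - i) ∧
    phi f ((w.drop (i - m)).take m) = (w.drop i).take m}

lemma listPow_succ {α : Type*} (x : List α) (k : ℕ) :
    listPow x (k+1) = x ++ listPow x k := by
  simp [listPow, List.replicate_succ]

lemma listPow_succ' {α : Type*} (x : List α) (k : ℕ) :
    listPow x (k+1) = listPow x k ++ x := by
  induction k with
  | zero => simp [listPow]
  | succ n ih => simp [listPow, List.replicate_succ', List.flatten_append]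

lemma listPow_reverse {α : Type*} (x : List α) (k : ℕ) :
    (listPow x k).reverse = listPow x.reverse k := by
  induction k with
  | zero => simp [listPow]
  | succ n ih => rw [listPow_succ', List.reverse_append, ih, listPow_succ]

lemma listPow_length {α : Type*} (x : List α) (k : ℕ) :
    (listPow x k).length = k * x.length := by
  simp [listPow, List.length_flatten, List.map_replicate, mul_comm]

/-- if `m = mp_s^j((w[1..i])^R)` is finite and `m ≤ cmp_w[i]`, then
`i ≥ jm`, `i + m ≤ n`, and `w[i−jm+1..i+m] = x^j φ(x)` where `x = w[i−m+1..i]`,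
`|x| = m > s`. -/
theorem stmt12 {α : Type*} (j s : ℕ) (hj : 1 ≤ j) (f : α → α)
    (hf : Function.Involutive f) (w : List α) (i m : ℕ)
    (hi1 : 1 ≤ i) (hi2 : i ≤ w.length)
    (hm : minPeriod j s ((w.take i).reverse) = (m : ℕ∞))
    (hcmp : m ≤ cmpArr f w i) :
    j * m ≤ i ∧ i + m ≤ w.length ∧ s < m ∧
      ((w.drop (i - m)).take m).length = m ∧
      (w.drop (i - j * m)).take (j * m + m) =
        listPow ((w.drop (i - m)).take m) j ++ phi f ((w.drop (i - m)).take m) := by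
  set u : List α := (w.take i).reverse with hu
  have hulen : u.length = i := by
    simp [hu, List.length_take, min_eq_left hi2]
  -- extract membership from the sInf
  have hmem : ∃ m' : ℕ, (m : ℕ∞) = (m' : ℕ∞) ∧ s < m' ∧ j * m' ≤ u.length ∧
      listPow (u.take m') j <+: u := by
    have hlt : sInf {N : ℕ∞ | ∃ m' : ℕ, N = (m' : ℕ∞) ∧ s < m' ∧ j * m' ≤ u.length ∧
        listPow (u.take m') j <+: u} < (m : ℕ∞) + 1 := by
      rw [← minPeriod, hm, ← Nat.cast_one, ← Nat.cast_add]
      exact_mod_cast lt_add_one m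
    obtain ⟨b, hb, hblt⟩ := sInf_lt_iff.mp hlt
    have hge : (m : ℕ∞) ≤ b := by
      rw [← hm]; exact sInf_le hb
    obtain ⟨m', hbe, h1, h2, h3⟩ := hb
    subst hbe
    have h4 : m' < m + 1 := by exact_mod_cast hblt
    have h5 : m ≤ m' := by exact_mod_cast hge
    have h6 : m' = m := by omega
    subst h6
    exact ⟨m', rfl, h1, h2, h3⟩
  obtain ⟨m', hm'eq, hs, hlen, hpref⟩ := hmem
  have hmm : m' = m := by exact_mod_cast hm'eq.symm
  subst hmm
  rw [hulen] at hlen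
  -- extract the cmp property
  set S : Set ℕ := {m' : ℕ | m' ≤ min i (w.length - i) ∧
    phi f ((w.drop (i - m')).take m') = (w.drop i).take m'} with hS
  have hSne : S.Nonempty := ⟨0, by simp [hS, phi]⟩
  have hSbdd : BddAbove S := ⟨min i (w.length - i), fun a ha => ha.1⟩
  have hMmem : cmpArr f w i ∈ S := Nat.sSup_mem hSne hSbdd
  set M := cmpArr f w i with hM
  obtain ⟨hM1, hM2⟩ := hMmem
  have hmM : m' ≤ M := hcmp
  have hmi : m' ≤ i := le_trans hmM (le_trans hM1 (min_le_left _ _))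
  have hmL : m' ≤ w.length - i := le_trans hmM (le_trans hM1 (min_le_right _ _))
  have hiL : i + m' ≤ w.length := by omega
  set x : List α := (w.drop (i - m')).take m' with hx
  have hxlen : x.length = m' := by
    rw [hx, List.length_take, List.length_drop]; omega
  -- the palindromic property at m'
  have hMi : M ≤ i := le_trans hM1 (min_le_left _ _)
  have hulenM : ((w.drop (i - M)).take M).length = M := by
    rw [List.length_take, List.length_drop]; omega
  have hkey : ((w.drop (i - M)).take M).drop (M - m') = x := by
    rw [List.drop_take, List.drop_drop,
      show M - (M - m') = m' by omega, show i - M + (M - m') = i - m' by omega, hx]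
  have hpal : phi f x = (w.drop i).take m' := by
    have h := congrArg (fun l => l.take m') hM2
    try simp only at h
    rw [List.take_take, min_eq_left hmM] at h
    rw [← h]
    show phi f x = (phi f ((w.drop (i - M)).take M)).take m'
    rw [phi, phi, List.take_reverse, List.length_map, hulenM,
      ← List.map_drop, hkey]
  -- turn the prefix into a suffix of w.take i
  have hutake : u.take m' = x.reverse := by
    rw [hu, List.take_reverse, List.length_take, min_eq_left hi2, List.drop_take,
      show i - (i - m') = m' by omega, hx]
  rw [hutake, ← listPow_reverse] at hpref
  have hsuff : listPow x j <:+ w.take i := List.reverse_prefix.mp hpref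
  obtain ⟨t, ht⟩ := hsuff
  have hplen : (listPow x j).length = j * m' := by rw [listPow_length, hxlen]
  have htlen : t.length = i - j * m' := by
    have := congrArg List.length ht
    simp [List.length_take, min_eq_left hi2, hplen] at this
    omega
  have hpow : (w.drop (i - j * m')).take (j * m') = listPow x j := by
    have h := congrArg (fun l => l.drop t.length) ht
    simp only [List.drop_left] at h
    rw [h, htlen, List.drop_take]
    congr 1
    omega
  refine ⟨hlen, hiL, hs, hxlen, ?_⟩
  rw [List.take_add, hpow, List.drop_drop]
  congr 1
  · rw [show i - j * m' + j * m' = i by omega, hpal]
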